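/- König's edge-coloring theorem for regular bipartite graphs: every k-regular bipartite graph admits a proper edge coloring with exactly k colors, i.e., its edge set can be partitioned into k perfect matchings. -/

import Mathlib

set_option maxHeartbeats 1000000

open SimpleGraph

lemma exists_pm_aux {V : Type*} [Fintype V] (G : SimpleGraph V) (U : Set V)
    (hbip : ∀ u v : V, G.Adj u v → (u ∈ U ↔ v ∉ U)) {k : ℕ} (hk : 0 < k)
    (hreg : ∀ v : V, (G.neighborSet v).ncard = k) :
    ∃ m : V → V, (∀ v, G.Adj v (m v)) ∧ (∀ v, m (m v) = v) := by
  classical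
  haveI : DecidableRel G.Adj := Classical.decRel _
  have hdeg : ∀ v, (G.neighborFinset v).card = k := by
    intro v
    rw [← hreg v, SimpleGraph.neighborFinset_def, ← Set.ncard_eq_toFinset_card']
  have hall : ∀ S : Finset V, S.card ≤ ((S.biUnion fun x => G.neighborFinset x : Finset V)).card := by
    intro S
    set T : Finset V := S.biUnion (fun x => G.neighborFinset x) with hT
    have hsubT : ∀ x ∈ S, G.neighborFinset x ⊆ T := fun x hx =>
      Finset.subset_biUnion_of_mem (fun x => G.neighborFinset x) hx
    have h3 : ∑ x ∈ S, (G.neighborFinset x).card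
        = ∑ w ∈ T, (S.filter (fun x => w ∈ G.neighborFinset x)).card := by
      calc ∑ x ∈ S, (G.neighborFinset x).card
          = ∑ x ∈ S, (T.filter (fun w => w ∈ G.neighborFinset x)).card := by
            apply Finset.sum_congr rfl
            intro x hx
            congr 1
            ext w
            simp only [Finset.mem_filter]
            exact ⟨fun h => ⟨hsubT x hx h, h⟩, fun h => h.2⟩
        _ = ∑ x ∈ S, ∑ w ∈ T, if w ∈ G.neighborFinset x then 1 else 0 := by
            simp only [Finset.card_filter]
        _ = ∑ w ∈ T, ∑ x ∈ S, if w ∈ G.neighborFinset x then 1 else 0 :=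
            Finset.sum_comm
        _ = ∑ w ∈ T, (S.filter (fun x => w ∈ G.neighborFinset x)).card := by
            simp only [Finset.card_filter]
    have h4 : ∀ w, (S.filter (fun x => w ∈ G.neighborFinset x)).card ≤ k := by
      intro w
      rw [← hdeg w]
      apply Finset.card_le_card
      intro x hx
      rw [Finset.mem_filter] at hx
      rw [SimpleGraph.mem_neighborFinset] at hx ⊢
      exact hx.2.symm
    have hcount : k * S.card ≤ k * T.card := by
      calc k * S.card = ∑ _x ∈ S, k := by rw [Finset.sum_const, smul_eq_mul, mul_comm]
        _ = ∑ x ∈ S, (G.neighborFinset x).card := by simp [hdeg]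
        _ = ∑ w ∈ T, (S.filter (fun x => w ∈ G.neighborFinset x)).card := h3
        _ ≤ ∑ _w ∈ T, k := Finset.sum_le_sum (fun w _ => h4 w)
        _ = k * T.card := by rw [Finset.sum_const, smul_eq_mul, mul_comm]
    exact Nat.le_of_mul_le_mul_left hcount hk
  obtain ⟨f, hfinj, hf⟩ :=
    (Finset.all_card_le_biUnion_card_iff_exists_injective (fun x => G.neighborFinset x)).mp hall
  have hfa : ∀ v, G.Adj v (f v) := fun v => (SimpleGraph.mem_neighborFinset _ _ _).mp (hf v)
  let e : V ≃ V := Equiv.ofBijective f (Finite.injective_iff_bijective.mp hfinj)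
  have hea : ∀ v, G.Adj v (e v) := hfa
  refine ⟨fun v => if v ∈ U then e v else e.symm v, ?_, ?_⟩
  · intro v
    by_cases hv : v ∈ U
    · simpa [hv] using hea v
    · have := hea (e.symm v)
      rw [Equiv.apply_symm_apply] at this
      simpa [hv] using this.symm
  · intro v
    by_cases hv : v ∈ U
    · have h1 : e v ∉ U := (hbip v (e v) (hea v)).mp hv
      simp [hv, h1]
    · have h2 : G.Adj (e.symm v) v := by
        have := hea (e.symm v); rwa [Equiv.apply_symm_apply] at this
      have h1 : e.symm v ∈ U := (hbip _ _ h2).mpr hv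
      simp [hv, h1]

lemma koenig_aux {V : Type*} [Fintype V] :
    ∀ (k : ℕ) (G : SimpleGraph V) (U : Set V),
    (∀ u v : V, G.Adj u v → (u ∈ U ↔ v ∉ U)) →
    (∀ v : V, (G.neighborSet v).ncard = k) →
    ∃ c : G.edgeSet → Fin k,
      (∀ e₁ e₂ : G.edgeSet, e₁ ≠ e₂ → (∃ v : V, v ∈ (e₁ : Sym2 V) ∧ v ∈ (e₂ : Sym2 V)) →
        c e₁ ≠ c e₂) ∧
      (∀ (i : Fin k) (v : V), ∃! e : G.edgeSet, c e = i ∧ v ∈ (e : Sym2 V)) := by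
  intro k
  induction k with
  | zero =>
    intro G U hbip hreg
    have hempty : ∀ e : G.edgeSet, False := by
      rintro ⟨e, he⟩
      induction e with
      | _ a b =>
        rw [SimpleGraph.mem_edgeSet] at he
        have hmem : b ∈ G.neighborSet a := he
        have h0 : (G.neighborSet a) = ∅ :=
          (Set.ncard_eq_zero (Set.toFinite _)).mp (hreg a)
        rw [h0] at hmem
        exact hmem
    exact ⟨fun e => (hempty e).elim, fun e₁ => (hempty e₁).elim, fun i => i.elim0⟩
  | succ k ih =>
    intro G U hbip hreg
    classical
    obtain ⟨m, hadj, hinv⟩ := exists_pm_aux G U hbip (Nat.succ_pos k) hreg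
    set M : Set (Sym2 V) := {e | ∃ v, e = s(v, m v)} with hMdef
    set G' : SimpleGraph V := G.deleteEdges M with hG'
    have hmem : ∀ a b : V, s(a, b) ∈ M ↔ b = m a := by
      intro a b
      constructor
      · rintro ⟨v, hv⟩
        rw [Sym2.eq_iff] at hv
        rcases hv with ⟨rfl, rfl⟩ | ⟨h1, rfl⟩
        · rfl
        · rw [h1, hinv]
      · rintro rfl; exact ⟨a, rfl⟩
    have hbip' : ∀ u v : V, G'.Adj u v → (u ∈ U ↔ v ∉ U) := by
      intro u v h
      rw [hG', SimpleGraph.deleteEdges_adj] at h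
      exact hbip u v h.1
    have hreg' : ∀ v : V, (G'.neighborSet v).ncard = k := by
      intro v
      have hset : G'.neighborSet v = G.neighborSet v \ {m v} := by
        ext w
        simp only [SimpleGraph.mem_neighborSet, hG', SimpleGraph.deleteEdges_adj,
          Set.mem_diff, Set.mem_singleton_iff, hmem]
      have hmv : m v ∈ G.neighborSet v := hadj v
      rw [hset, Set.ncard_diff_singleton_of_mem hmv, hreg v]
      omega
    obtain ⟨c', hc'₁, hc'₂⟩ := ih G' U hbip' hreg'
    have hsub : ∀ e : G'.edgeSet, (e : Sym2 V) ∈ G.edgeSet := by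
      intro e
      exact SimpleGraph.edgeSet_mono (SimpleGraph.deleteEdges_le M) e.2
    have hnotM : ∀ e : G'.edgeSet, (e : Sym2 V) ∉ M := by
      rintro ⟨e, he⟩
      induction e with
      | _ a b =>
        rw [SimpleGraph.mem_edgeSet, hG', SimpleGraph.deleteEdges_adj] at he
        exact he.2
    have hmemG' : ∀ (e : G.edgeSet), (e : Sym2 V) ∉ M → (e : Sym2 V) ∈ G'.edgeSet := by
      rintro ⟨e, he⟩ h
      induction e with
      | _ a b =>
        rw [SimpleGraph.mem_edgeSet] at he ⊢
        rw [hG', SimpleGraph.deleteEdges_adj]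
        exact ⟨he, h⟩
    set c : G.edgeSet → Fin (k + 1) := fun e =>
      if h : (e : Sym2 V) ∈ M then Fin.last k
      else (c' ⟨e, hmemG' e h⟩).castSucc with hcdef
    have hclast : ∀ (e : G.edgeSet), (e : Sym2 V) ∈ M → c e = Fin.last k := by
      intro e h; simp only [hcdef, dif_pos h]
    have hccast : ∀ (e : G.edgeSet) (h : (e : Sym2 V) ∉ M),
        c e = (c' ⟨e, hmemG' e h⟩).castSucc := by
      intro e h; simp only [hcdef, dif_neg h]
    have hMe : ∀ (v : V) (e : G.edgeSet), (e : Sym2 V) ∈ M → v ∈ (e : Sym2 V) →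
        (e : Sym2 V) = s(v, m v) := by
      rintro v ⟨e, he⟩ hMmem hv
      obtain ⟨a, rfl⟩ := hMmem
      simp only at hv ⊢
      rcases Sym2.mem_iff.mp hv with rfl | h
      · rfl
      · rw [h, hinv, Sym2.eq_swap]
    refine ⟨c, ?_, ?_⟩
    · rintro e₁ e₂ hne ⟨v, hv₁, hv₂⟩
      by_cases h₁ : (e₁ : Sym2 V) ∈ M <;> by_cases h₂ : (e₂ : Sym2 V) ∈ M
      · exact absurd (Subtype.ext ((hMe v e₁ h₁ hv₁).trans (hMe v e₂ h₂ hv₂).symm)) hne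
      · rw [hclast e₁ h₁, hccast e₂ h₂]
        exact (Fin.castSucc_lt_last _).ne'
      · rw [hccast e₁ h₁, hclast e₂ h₂]
        exact (Fin.castSucc_lt_last _).ne
      · rw [hccast e₁ h₁, hccast e₂ h₂]
        intro hcc
        have hne' : (⟨e₁, hmemG' e₁ h₁⟩ : G'.edgeSet) ≠ ⟨e₂, hmemG' e₂ h₂⟩ := by
          intro h
          have h2 := congrArg Subtype.val h
          exact hne (Subtype.ext h2)
        exact hc'₁ _ _ hne' ⟨v, hv₁, hv₂⟩ (Fin.castSucc_injective _ hcc)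
    · intro i v
      by_cases hi : i = Fin.last k
      · subst hi
        refine ⟨⟨s(v, m v), (SimpleGraph.mem_edgeSet G).mpr (hadj v)⟩,
          ⟨hclast _ ⟨v, rfl⟩, Sym2.mem_mk_left v (m v)⟩, ?_⟩
        rintro e ⟨hce, hve⟩
        have heM : (e : Sym2 V) ∈ M := by
          by_contra h
          rw [hccast e h] at hce
          exact (Fin.castSucc_lt_last _).ne hce
        exact Subtype.ext (hMe v e heM hve)
      · have hlt : (i : ℕ) < k :=
          lt_of_le_of_ne (Nat.lt_succ_iff.mp i.isLt) (fun h => hi (Fin.ext h))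
        set j : Fin k := ⟨i, hlt⟩ with hjdef
        have hij : i = j.castSucc := Fin.ext rfl
        obtain ⟨e', ⟨hce', hve'⟩, huniq⟩ := hc'₂ j v
        refine ⟨⟨e', hsub e'⟩, ⟨?_, hve'⟩, ?_⟩
        · rw [hij, hccast ⟨e', hsub e'⟩ (hnotM e')]
          exact congrArg Fin.castSucc ((congrArg c' (Subtype.ext rfl)).trans hce')
        · rintro e ⟨hce, hve⟩
          have heM : (e : Sym2 V) ∉ M := by
            intro h
            rw [hclast e h, hij] at hce
            exact (Fin.castSucc_lt_last j).ne' hce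
          rw [hccast e heM, hij] at hce
          have := huniq ⟨e, hmemG' e heM⟩ ⟨Fin.castSucc_injective _ hce, hve⟩
          have h2 := congrArg Subtype.val this
          exact Subtype.ext h2

/-- König's edge-coloring theorem for regular bipartite graphs: every `k`-regular bipartite
graph admits a proper edge coloring with exactly `k` colors, whose color classes are perfect
matchings (each vertex lies on exactly one edge of each color). -/
theorem stmt_6 {V : Type*} [Fintype V] (G : SimpleGraph V) (k : ℕ) (U : Set V)
    (hbip : ∀ u v : V, G.Adj u v → (u ∈ U ↔ v ∉ U))
    (hreg : ∀ v : V, (G.neighborSet v).ncard = k) :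
    ∃ c : G.edgeSet → Fin k,
      (∀ e₁ e₂ : G.edgeSet, e₁ ≠ e₂ → (∃ v : V, v ∈ (e₁ : Sym2 V) ∧ v ∈ (e₂ : Sym2 V)) →
        c e₁ ≠ c e₂) ∧
      (∀ (i : Fin k) (v : V), ∃! e : G.edgeSet, c e = i ∧ v ∈ (e : Sym2 V)) :=
  koenig_aux k G U hbip hreg
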